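/- Let k ≥ 6 and let L be the set of ((k−2)/(k−3))⁺-A-free words over the alphabet Fin k = {0, 1, …, k−1}. Define: L₁ = the set of all w ∈ L such that w has the prefix [0,1,…,k−3] and no factor of w of length k−1 has pairwise distinct letters; L₂ = the set of all w ∈ L such that w has the prefix [0,1,…,k−2] and no factor of w of length k has pairwise distinct letters; L₃ = the set of all w ∈ L having the prefix [0,1,…,k−1]. Then L is finite if and only if each of L₁, L₂, and L₃ is finite. -/

import Mathlib

/-- `x` is a factor (contiguous subword) of `w`. -/
def IsFactor {A : Type*} (x w : List A) : Prop := ∃ p s, w = p ++ x ++ s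

/-- `w` is a strong Abelian `β`-power: `w = u₁ ++ u₂ ++ ⋯ ++ u_k ++ u'` where
`k = ⌊β⌋`, `u₁ ≠ []`, all `uᵢ` are Abelian equivalent (permutations of each other),
`u'` is Abelian equivalent to the prefix of `u₁` of length `|u'| < |u₁|`,
and `|w| = β·|u₁|`. -/
def IsStrongAPower {A : Type*} (β : ℚ) (w : List A) : Prop :=
  ∃ (u₁ : List A) (us : List (List A)) (u' : List A),
    u₁ ≠ [] ∧
    ((us.length : ℤ) + 1 = ⌊β⌋) ∧
    (∀ u ∈ us, u.Perm u₁) ∧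
    u'.length < u₁.length ∧
    u'.Perm (u₁.take u'.length) ∧
    w = (u₁ :: us).flatten ++ u' ∧
    ((w.length : ℚ) = β * u₁.length)

/-- `w` is `β`-A-free: no factor of `w` is a strong Abelian `γ`-power for a rational `γ ≥ β`. -/
def AFree {A : Type*} (β : ℚ) (w : List A) : Prop :=
  ∀ x, IsFactor x w → ∀ γ : ℚ, β ≤ γ → ¬ IsStrongAPower γ x

/-- `w` is `β⁺`-A-free: no factor of `w` is a strong Abelian `γ`-power for a rational `γ > β`. -/
def APlusFree {A : Type*} (β : ℚ) (w : List A) : Prop :=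
  ∀ x, IsFactor x w → ∀ γ : ℚ, β < γ → ¬ IsStrongAPower γ x

namespace Aux

theorem factor_refl {A : Type*} (w : List A) : IsFactor w w := ⟨[], [], by simp⟩

theorem factor_trans {A : Type*} {x y w : List A} (h1 : IsFactor x y) (h2 : IsFactor y w) :
    IsFactor x w := by
  obtain ⟨p, s, rfl⟩ := h1
  obtain ⟨p', s', rfl⟩ := h2
  exact ⟨p' ++ p, s ++ s', by simp⟩

theorem factor_take {A : Type*} (n : ℕ) (w : List A) : IsFactor (w.take n) w :=
  ⟨[], w.drop n, by simp⟩

theorem factor_drop {A : Type*} (n : ℕ) (w : List A) : IsFactor (w.drop n) w :=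
  ⟨w.take n, [], by simp⟩

theorem factor_map {A B : Type*} (f : A → B) {x w : List A} (h : IsFactor x w) :
    IsFactor (x.map f) (w.map f) := by
  obtain ⟨p, s, rfl⟩ := h
  exact ⟨p.map f, s.map f, by simp⟩

theorem aplusfree_factor {A : Type*} {β : ℚ} {v w : List A} (h : APlusFree β w)
    (hf : IsFactor v w) : APlusFree β v :=
  fun x hx γ hγ => h x (factor_trans hx hf) γ hγ

theorem sap_map {A B : Type*} (f : A → B) {γ : ℚ} {x : List A} (h : IsStrongAPower γ x) :
    IsStrongAPower γ (x.map f) := by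
  obtain ⟨u₁, us, u', h1, h2, h3, h4, h5, h6, h7⟩ := h
  refine ⟨u₁.map f, us.map (List.map f), u'.map f, by simpa using h1, by simpa using h2,
    ?_, by simpa using h4, ?_, ?_, by simpa using h7⟩
  · intro u hu
    obtain ⟨v, hv, rfl⟩ := List.mem_map.1 hu
    exact (h3 v hv).map f
  · simpa [List.map_take] using h5.map f
  · subst h6; simp [List.map_flatten]

theorem aplusfree_map {A : Type*} [DecidableEq A] (σ : Equiv.Perm A) {β : ℚ} {w : List A}
    (h : APlusFree β w) : APlusFree β (w.map σ) := by
  intro x hx γ hγ hpow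
  have hw : (w.map σ).map σ.symm = w := by
    simp [List.map_map]
  have hx' : IsFactor (x.map σ.symm) w := by
    have := factor_map σ.symm hx
    rwa [hw] at this
  exact h _ hx' γ hγ (sap_map σ.symm hpow)

theorem sap_square {A : Type*} {u : List A} (hu : u ≠ []) : IsStrongAPower 2 (u ++ u) := by
  refine ⟨u, [u], [], hu, by norm_num, by simp, by simpa using List.length_pos_iff.2 hu,
    by simp, by simp, by simp; ring⟩

end Aux
namespace Aux

theorem beta_lt_two {k : ℕ} (hk : 6 ≤ k) : ((k : ℚ) - 2) / ((k : ℚ) - 3) < 2 := by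
  have hk' : (6 : ℚ) ≤ (k : ℚ) := by exact_mod_cast hk
  rw [div_lt_iff₀ (by linarith)]
  linarith

theorem square_free {k : ℕ} (hk : 6 ≤ k) {w u : List (Fin k)}
    (h : APlusFree (((k : ℚ) - 2) / ((k : ℚ) - 3)) w) (hu : u ≠ [])
    (hf : IsFactor (u ++ u) w) : False :=
  h _ hf 2 (beta_lt_two hk) (sap_square hu)

theorem sap_repeat {A : Type*} {q : List A} (a : A) (hq : q ≠ []) :
    IsStrongAPower (((q.length : ℚ) + 2) / ((q.length : ℚ) + 1)) (a :: (q ++ [a])) := by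
  have hql : 1 ≤ q.length := List.length_pos_iff.2 hq
  have hql' : (1 : ℚ) ≤ (q.length : ℚ) := by exact_mod_cast hql
  refine ⟨a :: q, [], [a], by simp, ?_, by simp, by simp; omega, by simp, by simp, ?_⟩
  · have : ⌊((q.length : ℚ) + 2) / ((q.length : ℚ) + 1)⌋ = 1 := by
      rw [Int.floor_eq_iff]
      constructor
      · rw [le_div_iff₀ (by linarith)]; push_cast; linarith
      · rw [div_lt_iff₀ (by linarith)]; push_cast; linarith
    rw [this]; simp
  · have h1 : ((q.length : ℚ) + 1) ≠ 0 := by linarith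
    simp only [List.length_cons, List.length_append, List.length_singleton, List.length_nil]
    push_cast
    field_simp
    ring

theorem repeat_free {k : ℕ} (hk : 6 ≤ k) {w q : List (Fin k)} {a : Fin k}
    (h : APlusFree (((k : ℚ) - 2) / ((k : ℚ) - 3)) w)
    (hf : IsFactor (a :: (q ++ [a])) w) (hlen : q.length + 5 ≤ k) : False := by
  rcases eq_or_ne q [] with rfl | hq
  · exact square_free hk h (u := [a]) (by simp) (by simpa using hf)
  · have hkq : (6 : ℚ) ≤ (k : ℚ) := by exact_mod_cast hk
    have hlq : ((q.length : ℚ)) + 5 ≤ (k : ℚ) := by exact_mod_cast hlen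
    have hγ : ((k : ℚ) - 2) / ((k : ℚ) - 3) < ((q.length : ℚ) + 2) / ((q.length : ℚ) + 1) := by
      rw [div_lt_div_iff₀ (by linarith) (by linarith)]
      nlinarith
    exact h _ hf _ hγ (sap_repeat a hq)

theorem not_nodup_decomp {A : Type*} {l : List A} (h : ¬ l.Nodup) :
    ∃ (a : A) (p q r : List A), l = p ++ (a :: (q ++ [a])) ++ r := by
  induction l with
  | nil => simp at h
  | cons b t ih =>
    by_cases hb : b ∈ t
    · obtain ⟨q, r, rfl⟩ := List.append_of_mem hb
      exact ⟨b, [], q, r, by simp⟩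
    · have ht : ¬ t.Nodup := fun hn => h (List.nodup_cons.2 ⟨hb, hn⟩)
      obtain ⟨a, p, q, r, rfl⟩ := ih ht
      exact ⟨a, b :: p, q, r, by simp⟩

theorem perm_exists {A : Type*} [DecidableEq A] :
    ∀ (l₁ l₂ : List A), l₁.Nodup → l₂.Nodup → l₁.length = l₂.length →
      ∃ σ : Equiv.Perm A, l₁.map σ = l₂ := by
  intro l₁
  induction l₁ with
  | nil => intro l₂ _ _ hlen; exact ⟨1, by simp [(List.length_eq_zero_iff.1 hlen.symm)]⟩
  | cons a t ih =>
    intro l₂ h₁ h₂ hlen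
    match l₂, hlen with
    | b :: t₂, hlen =>
      obtain ⟨σ', hσ'⟩ := ih t₂ (List.nodup_cons.1 h₁).2 (List.nodup_cons.1 h₂).2
        (by simpa using hlen)
      refine ⟨σ'.trans (Equiv.swap b (σ' a)), ?_⟩
      simp only [List.map_cons, Equiv.trans_apply, Equiv.swap_apply_right]
      congr 1
      rw [← hσ']
      apply List.map_congr_left
      intro c hc
      have hca : c ≠ a := fun h => (List.nodup_cons.1 h₁).1 (h ▸ hc)
      have h1 : σ' c ≠ σ' a := fun h => hca (σ'.injective h)
      have h2 : σ' c ≠ b := by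
        intro h
        have : σ' c ∈ t₂ := hσ' ▸ List.mem_map_of_mem (f := σ') hc
        exact (List.nodup_cons.1 h₂).1 (h ▸ this)
      simp [Equiv.swap_apply_of_ne_of_ne h2 h1]

end Aux
namespace Aux

theorem getElem_idx_congr {A : Type*} {l : List A} {i j : ℕ} (h : i = j) (hj : j < l.length) :
    l[i]'(h ▸ hj) = l[j] := by subst h; rfl

theorem base_bound {k : ℕ} (hk : 6 ≤ k) {w : List (Fin k)}
    (h : APlusFree (((k : ℚ) - 2) / ((k : ℚ) - 3)) w)
    (hnod : ∀ x, IsFactor x w → x.length = k - 2 → ¬ x.Nodup) :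
    w.length ≤ 2 * k := by
  by_contra hlen
  push_neg at hlen
  have per : ∀ i (h2 : i + (k - 3) < w.length), w[i]'(by omega) = w[i + (k - 3)]'h2 := by
    intro i h2
    have hxlen : (List.take (k - 2) (List.drop i w)).length = k - 2 := by
      simp only [List.length_take, List.length_drop]
      omega
    have hfac : IsFactor (List.take (k - 2) (List.drop i w)) w :=
      factor_trans (factor_take _ _) (factor_drop _ _)
    have hnd : ¬ (List.take (k - 2) (List.drop i w)).Nodup := hnod _ hfac hxlen
    obtain ⟨a, p, q, r, hx⟩ := not_nodup_decomp hnd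
    have hlens : p.length + (q.length + 2) + r.length = k - 2 := by
      have := congrArg List.length hx
      rw [hxlen] at this
      simp at this
      omega
    have hq4 : k - 4 ≤ q.length := by
      by_contra hq5
      push_neg at hq5
      exact repeat_free hk h (factor_trans ⟨p, r, hx⟩ hfac) (by omega)
    have hq : q.length = k - 4 := by omega
    have hp : p = [] := List.length_eq_zero_iff.1 (by omega)
    have hr : r = [] := List.length_eq_zero_iff.1 (by omega)
    subst hp hr
    have hx2 : List.take (k - 2) (List.drop i w) = (a :: q) ++ [a] := by
      simpa using hx
    have h0 : (0 : ℕ) < (List.take (k - 2) (List.drop i w)).length := by omega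
    have hk3 : k - 3 < (List.take (k - 2) (List.drop i w)).length := by omega
    have C0 := List.getElem_of_eq hx2 h0
    have Ck := List.getElem_of_eq hx2 hk3
    have B' : ((a :: q) ++ [a])[k - 3]'(hx2 ▸ hk3) = a :=
      List.getElem_concat_length (by simp; omega) _
    have A' : ((a :: q) ++ [a])[0]'(hx2 ▸ h0) = a := by simp
    have A : (List.take (k - 2) (List.drop i w))[0]'h0 = w[i]'(by omega) := by
      simp only [List.getElem_take, List.getElem_drop]
      exact getElem_idx_congr (Nat.add_zero i) (by omega)
    have B : (List.take (k - 2) (List.drop i w))[k - 3]'hk3 = w[i + (k - 3)]'h2 := by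
      simp only [List.getElem_take, List.getElem_drop]
    rw [← A, ← B, C0, Ck, A', B']
  have hu1 : (w.take (k - 3)).length = k - 3 := by simp; omega
  have hueq : w.take (k - 3) = (w.drop (k - 3)).take (k - 3) := by
    apply List.ext_getElem
    · simp; omega
    · intro n h₁ h₂
      rw [List.getElem_take, List.getElem_take, List.getElem_drop,
        getElem_idx_congr (Nat.add_comm (k - 3) n) (by simp at h₂ ⊢; omega)]
      exact per n (by simp at h₂; omega)
  have hsq : IsFactor (w.take (k - 3) ++ w.take (k - 3)) w := by
    refine ⟨[], w.drop ((k - 3) + (k - 3)), ?_⟩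
    rw [List.nil_append]
    nth_rewrite 2 [hueq]
    rw [← List.take_add, List.take_append_drop]
  refine square_free hk h (fun hc => ?_) hsq
  rw [hc] at hu1
  simp at hu1
  omega

/-- If `x` is a factor of `w` with `x.length = m`, it appears as a window. -/
theorem window_of_factor {A : Type*} {x w : List A} {m : ℕ} (hf : IsFactor x w)
    (hx : x.length = m) :
    ∃ i, i + m ≤ w.length ∧ List.take m (List.drop i w) = x := by
  obtain ⟨p, s, rfl⟩ := hf
  refine ⟨p.length, by simp; omega, ?_⟩
  rw [List.append_assoc, List.drop_left, List.take_left' hx]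

theorem step {k m N C : ℕ} {β : ℚ} (hm : 1 ≤ m)
    (hN : ∀ v : List (Fin k), APlusFree β v → (v.take m).Nodup → m ≤ v.length →
      (∀ x, IsFactor x v → x.length = m + 1 → ¬ x.Nodup) → v.length ≤ N)
    (hC : ∀ v : List (Fin k), APlusFree β v →
      (∀ x, IsFactor x v → x.length = m → ¬ x.Nodup) → v.length ≤ C) :
    ∀ w : List (Fin k), APlusFree β w →
      (∀ x, IsFactor x w → x.length = m + 1 → ¬ x.Nodup) → w.length ≤ C + N := by
  intro w hw hfac
  by_cases hex : ∃ i, i + m ≤ w.length ∧ (List.take m (List.drop i w)).Nodup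
  · classical
    set i := Nat.find hex with hi
    obtain ⟨him, hind⟩ := Nat.find_spec hex
    -- the suffix from `i` is bounded by `N`
    have hsuf : w.length - i ≤ N := by
      have h1 : APlusFree β (w.drop i) := aplusfree_factor hw (factor_drop _ _)
      have h2 : ((w.drop i).take m).Nodup := hind
      have h3 : m ≤ (w.drop i).length := by simp; omega
      have h4 : ∀ x, IsFactor x (w.drop i) → x.length = m + 1 → ¬ x.Nodup :=
        fun x hx hlx => hfac x (factor_trans hx (factor_drop _ _)) hlx
      have := hN _ h1 h2 h3 h4
      simpa using this
    -- the prefix up to `i + m - 1` is bounded by `C`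
    have hpre : i + m - 1 ≤ C := by
      have h1 : APlusFree β (w.take (i + m - 1)) := aplusfree_factor hw (factor_take _ _)
      have h2 : ∀ x, IsFactor x (w.take (i + m - 1)) → x.length = m → ¬ x.Nodup := by
        intro x hx hlx hnd
        obtain ⟨j, hj, hjx⟩ := window_of_factor hx hlx
        have hjlen : j + m ≤ i + m - 1 := by
          have : (w.take (i + m - 1)).length ≤ i + m - 1 := by simp
          omega
        have hwin : List.take m (List.drop j (w.take (i + m - 1))) =
            List.take m (List.drop j w) := by
          rw [List.drop_take, List.take_take]
          congr 1
          omega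
        have hji : j < i := by omega
        exact Nat.find_min hex hji ⟨by omega, by rw [← hwin, hjx]; exact hnd⟩
      have := hC _ h1 h2
      simp only [List.length_take] at this
      omega
    omega
  · push_neg at hex
    have h2 : ∀ x, IsFactor x w → x.length = m → ¬ x.Nodup := by
      intro x hx hlx hnd
      obtain ⟨j, hj, hjx⟩ := window_of_factor hx hlx
      exact hex j hj (hjx ▸ hnd)
    exact le_trans (hC _ hw h2) (Nat.le_add_right _ _)

/-- Rename letters so that a nodup prefix becomes `(finRange k).take m`. -/
theorem rename {k m : ℕ} (hmk : m ≤ k) {v : List (Fin k)} (hnd : (v.take m).Nodup)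
    (hm : m ≤ v.length) :
    ∃ σ : Equiv.Perm (Fin k), (v.map σ).take m = (List.finRange k).take m := by
  obtain ⟨σ, hσ⟩ := perm_exists (v.take m) ((List.finRange k).take m) hnd
    ((List.take_sublist _ _).nodup (List.nodup_finRange k))
    (by simp [List.length_take]; omega)
  exact ⟨σ, by rw [← List.map_take]; exact hσ⟩

theorem hN_of_bound {k m N : ℕ} {β : ℚ} (hmk : m ≤ k)
    (hbound : ∀ w : List (Fin k), APlusFree β w → (List.finRange k).take m <+: w →
      (∀ x, IsFactor x w → x.length = m + 1 → ¬ x.Nodup) → w.length ≤ N) :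
    ∀ v : List (Fin k), APlusFree β v → (v.take m).Nodup → m ≤ v.length →
      (∀ x, IsFactor x v → x.length = m + 1 → ¬ x.Nodup) → v.length ≤ N := by
  intro v hv hnd hlen hfacv
  obtain ⟨σ, hσ⟩ := rename hmk hnd hlen
  have hfree : APlusFree β (v.map σ) := aplusfree_map σ hv
  have hpre : (List.finRange k).take m <+: v.map σ := by
    rw [← hσ]; exact List.take_prefix _ _
  have hfac' : ∀ x, IsFactor x (v.map σ) → x.length = m + 1 → ¬ x.Nodup := by
    intro x hx hlx hnd'
    have h1 : IsFactor (x.map σ.symm) v := by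
      have := factor_map σ.symm hx
      rwa [List.map_map, show (⇑σ.symm ∘ ⇑σ) = id from funext (fun a => σ.symm_apply_apply a),
        List.map_id] at this
    exact hfacv _ h1 (by simpa using hlx) (hnd'.map σ.symm.injective)
  have := hbound _ hfree hpre hfac'
  simpa using this

theorem bound_of_finite {A : Type*} {S : Set (List A)} (h : S.Finite) :
    ∃ N, ∀ w ∈ S, w.length ≤ N := by
  obtain ⟨N, hN⟩ := (h.image List.length).bddAbove
  exact ⟨N, fun w hw => hN ⟨w, hw, rfl⟩⟩

end Aux

theorem statement_1 (k : ℕ) (hk : 6 ≤ k) :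
    {w : List (Fin k) | APlusFree (((k : ℚ) - 2) / ((k : ℚ) - 3)) w}.Finite ↔
      ({w : List (Fin k) | APlusFree (((k : ℚ) - 2) / ((k : ℚ) - 3)) w ∧
          (List.finRange k).take (k - 2) <+: w ∧
          ∀ x, IsFactor x w → x.length = k - 1 → ¬ x.Nodup}.Finite ∧
       {w : List (Fin k) | APlusFree (((k : ℚ) - 2) / ((k : ℚ) - 3)) w ∧
          (List.finRange k).take (k - 1) <+: w ∧
          ∀ x, IsFactor x w → x.length = k → ¬ x.Nodup}.Finite ∧
       {w : List (Fin k) | APlusFree (((k : ℚ) - 2) / ((k : ℚ) - 3)) w ∧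
          List.finRange k <+: w}.Finite) := by
  constructor
  · intro h
    exact ⟨h.subset (fun w hw => hw.1), h.subset (fun w hw => hw.1),
      h.subset (fun w hw => hw.1)⟩
  · rintro ⟨h1, h2, h3⟩
    obtain ⟨N₁, hN₁⟩ := Aux.bound_of_finite h1
    obtain ⟨N₂, hN₂⟩ := Aux.bound_of_finite h2
    obtain ⟨N₃, hN₃⟩ := Aux.bound_of_finite h3
    set β := (((k : ℚ) - 2) / ((k : ℚ) - 3)) with hβ
    have e1 : k - 2 + 1 = k - 1 := by omega
    have e2 : k - 1 + 1 = k := by omega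
    -- Step 1 : words with no nodup factor of length k-1
    have hstep1 : ∀ v : List (Fin k), APlusFree β v → (v.take (k - 2)).Nodup →
        k - 2 ≤ v.length → (∀ x, IsFactor x v → x.length = (k - 2) + 1 → ¬ x.Nodup) →
        v.length ≤ N₁ := by
      refine Aux.hN_of_bound (by omega) ?_
      intro w hw hpre hfac
      exact hN₁ w ⟨hw, hpre, fun x hx hlx => hfac x hx (by omega)⟩
    have B1 := Aux.step (k := k) (β := β) (m := k - 2) (by omega) hstep1
      (fun v hv hc => Aux.base_bound hk hv hc)
    rw [e1] at B1
    -- Step 2 : words with no nodup factor of length k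
    have hstep2 : ∀ v : List (Fin k), APlusFree β v → (v.take (k - 1)).Nodup →
        k - 1 ≤ v.length → (∀ x, IsFactor x v → x.length = (k - 1) + 1 → ¬ x.Nodup) →
        v.length ≤ N₂ := by
      refine Aux.hN_of_bound (by omega) ?_
      intro w hw hpre hfac
      exact hN₂ w ⟨hw, hpre, fun x hx hlx => hfac x hx (by omega)⟩
    have B2 := Aux.step (k := k) (β := β) (m := k - 1) (by omega) hstep2 B1
    rw [e2] at B2
    -- Step 3 : all words
    have hfin : (List.finRange k).take k = List.finRange k := by
      exact List.take_of_length_le (by simp)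
    have hstep3 : ∀ v : List (Fin k), APlusFree β v → (v.take k).Nodup →
        k ≤ v.length → (∀ x, IsFactor x v → x.length = k + 1 → ¬ x.Nodup) →
        v.length ≤ N₃ := by
      refine Aux.hN_of_bound (le_refl k) ?_
      intro w hw hpre _
      rw [hfin] at hpre
      exact hN₃ w ⟨hw, hpre⟩
    have B3 := Aux.step (k := k) (β := β) (m := k) (by omega) hstep3 B2
    have htop : ∀ w : List (Fin k), (∀ x, IsFactor x w → x.length = k + 1 → ¬ x.Nodup) := by
      intro w x _ hlx hnd
      have := hnd.length_le_card
      rw [Fintype.card_fin] at this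
      omega
    refine (List.finite_length_le (Fin k) (2 * k + N₁ + N₂ + N₃)).subset ?_
    intro w hw
    have := B3 w hw (htop w)
    simpa using this
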